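/- For each integer k ≥ 1 let R_k denote the commutative ring ℤ[u, v]/(u² − 2k·v, u·v, v²). Then: (1) for integers k, l ≥ 1 with k ≠ l, the rings R_k and R_l are not isomorphic as rings; (2) for all k, l ≥ 1, the ℚ-algebras R_k ⊗_ℤ ℚ and R_l ⊗_ℤ ℚ are isomorphic (both are isomorphic to ℚ[u]/(u³)). -/

import Mathlib

open MvPolynomial

/-- The ring `R_k = ℤ[u, v] / (u² − 2k·v, u·v, v²)`, the integral cohomology ring
(modulo grading) of `S^{2m} ∪_{f_{2k}} D^{4m}` for a map of Hopf invariant `2k`. -/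
abbrev Rring (k : ℕ) : Type :=
  MvPolynomial (Fin 2) ℤ ⧸ (Ideal.span
    {(X 0 : MvPolynomial (Fin 2) ℤ) ^ 2 - C (2 * (k : ℤ)) * X 1, X 0 * X 1, (X 1) ^ 2} :
      Ideal (MvPolynomial (Fin 2) ℤ))

/-- For `k ≠ l`, the rings `R_k` and `R_l` are not isomorphic, while the rationalizations
`R_k ⊗ ℚ` and `R_l ⊗ ℚ` are always isomorphic as `ℚ`-algebras (both being isomorphic to
`ℚ[u]/(u³)`). -/
@[ext] structure M (k : ℕ) where
  a : ℤ
  b : ℤ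
  c : ℤ

namespace M
variable {k : ℕ}

instance : Zero (M k) := ⟨⟨0,0,0⟩⟩
instance : One (M k) := ⟨⟨1,0,0⟩⟩
instance : Add (M k) := ⟨fun x y => ⟨x.a+y.a, x.b+y.b, x.c+y.c⟩⟩
instance : Neg (M k) := ⟨fun x => ⟨-x.a, -x.b, -x.c⟩⟩
instance : Mul (M k) := ⟨fun x y =>
  ⟨x.a*y.a, x.a*y.b + x.b*y.a, x.a*y.c + x.c*y.a + 2*(k:ℤ)*(x.b*y.b)⟩⟩

@[simp] lemma zero_a : (0 : M k).a = 0 := rfl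
@[simp] lemma zero_b : (0 : M k).b = 0 := rfl
@[simp] lemma zero_c : (0 : M k).c = 0 := rfl
@[simp] lemma one_a : (1 : M k).a = 1 := rfl
@[simp] lemma one_b : (1 : M k).b = 0 := rfl
@[simp] lemma one_c : (1 : M k).c = 0 := rfl
@[simp] lemma add_a (x y : M k) : (x+y).a = x.a + y.a := rfl
@[simp] lemma add_b (x y : M k) : (x+y).b = x.b + y.b := rfl
@[simp] lemma add_c (x y : M k) : (x+y).c = x.c + y.c := rfl
@[simp] lemma neg_a (x : M k) : (-x).a = -x.a := rfl
@[simp] lemma neg_b (x : M k) : (-x).b = -x.b := rfl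
@[simp] lemma neg_c (x : M k) : (-x).c = -x.c := rfl
@[simp] lemma mul_a (x y : M k) : (x*y).a = x.a * y.a := rfl
@[simp] lemma mul_b (x y : M k) : (x*y).b = x.a*y.b + x.b*y.a := rfl
@[simp] lemma mul_c (x y : M k) : (x*y).c = x.a*y.c + x.c*y.a + 2*(k:ℤ)*(x.b*y.b) := rfl

instance : CommRing (M k) where
  add_assoc x y z := by ext <;> simp <;> ring
  zero_add x := by ext <;> simp
  add_zero x := by ext <;> simp
  add_comm x y := by ext <;> simp <;> ring
  neg_add_cancel x := by ext <;> simp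
  left_distrib x y z := by ext <;> simp <;> ring
  right_distrib x y z := by ext <;> simp <;> ring
  zero_mul x := by ext <;> simp
  mul_zero x := by ext <;> simp
  mul_assoc x y z := by ext <;> simp <;> ring
  one_mul x := by ext <;> simp
  mul_one x := by ext <;> simp
  mul_comm x y := by ext <;> simp <;> ring
  nsmul := nsmulRec
  zsmul := zsmulRec

@[simp] lemma sub_a (x y : M k) : (x-y).a = x.a - y.a := rfl
@[simp] lemma sub_b (x y : M k) : (x-y).b = x.b - y.b := rfl
@[simp] lemma sub_c (x y : M k) : (x-y).c = x.c - y.c := rfl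

/-- The canonical map `ℤ → M k`. -/
def iota : ℤ →+* M k where
  toFun n := ⟨n, 0, 0⟩
  map_one' := rfl
  map_mul' x y := by ext <;> simp
  map_zero' := rfl
  map_add' x y := by ext <;> simp

@[simp] lemma intCast_eq (n : ℤ) : ((n : M k)) = ⟨n, 0, 0⟩ := by
  rw [← eq_intCast (iota (k := k)) n]; rfl
@[simp] lemma intCast_a (n : ℤ) : ((n : M k)).a = n := by simp
@[simp] lemma intCast_b (n : ℤ) : ((n : M k)).b = 0 := by simp
@[simp] lemma intCast_c (n : ℤ) : ((n : M k)).c = 0 := by simp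

end M


namespace Rproof
variable {k : ℕ}

noncomputable def phi (k : ℕ) : MvPolynomial (Fin 2) ℤ →+* M k :=
  eval₂Hom M.iota ![⟨0,1,0⟩, ⟨0,0,1⟩]

@[simp] lemma phi_C (n : ℤ) : phi k (C n) = ⟨n,0,0⟩ := by
  simp [phi]

@[simp] lemma phi_X0 : phi k (X 0) = ⟨0,1,0⟩ := by simp [phi]
@[simp] lemma phi_X1 : phi k (X 1) = ⟨0,0,1⟩ := by simp [phi]

noncomputable abbrev Idl (k : ℕ) : Ideal (MvPolynomial (Fin 2) ℤ) :=
  Ideal.span {(X 0 : MvPolynomial (Fin 2) ℤ) ^ 2 - C (2 * (k : ℤ)) * X 1, X 0 * X 1, (X 1) ^ 2}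

lemma g1_mem : ((X 0 : MvPolynomial (Fin 2) ℤ) ^ 2 - C (2 * (k : ℤ)) * X 1) ∈ Idl k :=
  Ideal.subset_span (by simp)
lemma g2_mem : ((X 0 : MvPolynomial (Fin 2) ℤ) * X 1) ∈ Idl k :=
  Ideal.subset_span (by simp)
lemma g3_mem : ((X 1 : MvPolynomial (Fin 2) ℤ) ^ 2) ∈ Idl k :=
  Ideal.subset_span (by simp)

lemma phi_g1 : phi k ((X 0 : MvPolynomial (Fin 2) ℤ) ^ 2 - C (2 * (k : ℤ)) * X 1) = 0 := by
  rw [map_sub, map_mul, map_pow]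
  simp only [phi_C, phi_X0, phi_X1]
  ext <;> simp [pow_two] <;> ring
lemma phi_g2 : phi k ((X 0 : MvPolynomial (Fin 2) ℤ) * X 1) = 0 := by
  rw [map_mul]; simp only [phi_X0, phi_X1]; ext <;> simp
lemma phi_g3 : phi k ((X 1 : MvPolynomial (Fin 2) ℤ) ^ 2) = 0 := by
  rw [map_pow]; simp only [phi_X1]; ext <;> simp [pow_two]

lemma Idl_le_ker : Idl k ≤ RingHom.ker (phi k) := by
  rw [Idl, Ideal.span_le]
  intro p hp
  simp only [Set.mem_insert_iff, Set.mem_singleton_iff] at hp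
  rcases hp with h | h | h <;> subst h
  · exact phi_g1
  · exact phi_g2
  · exact phi_g3

/-- every polynomial is congruent mod `Idl k` to `a + b X0 + c X1`. -/
lemma reduce (p : MvPolynomial (Fin 2) ℤ) :
    ∃ a b c : ℤ, p - (C a + C b * X 0 + C c * X 1) ∈ Idl k := by
  induction p using MvPolynomial.induction_on with
  | C n => exact ⟨n, 0, 0, by simp⟩
  | add p q hp hq =>
      obtain ⟨a, b, c, hp⟩ := hp
      obtain ⟨a', b', c', hq⟩ := hq
      refine ⟨a + a', b + b', c + c', ?_⟩
      have := Ideal.add_mem _ hp hq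
      convert this using 1
      simp only [map_add]; ring
  | mul_X p i hp =>
      obtain ⟨a, b, c, hp⟩ := hp
      fin_cases i
      · refine ⟨0, a, 2 * (k : ℤ) * b, ?_⟩
        have h1 : (p - (C a + C b * X 0 + C c * X 1)) * X 0 ∈ Idl k :=
          Ideal.mul_mem_right _ _ hp
        have h2 : C b * ((X 0 : MvPolynomial (Fin 2) ℤ) ^ 2 - C (2 * (k : ℤ)) * X 1) ∈ Idl k :=
          Ideal.mul_mem_left _ _ g1_mem
        have h3 : C c * ((X 0 : MvPolynomial (Fin 2) ℤ) * X 1) ∈ Idl k :=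
          Ideal.mul_mem_left _ _ g2_mem
        have := Ideal.add_mem _ (Ideal.add_mem _ h1 h2) h3
        convert this using 1
        simp only [map_mul, Fin.zero_eta, Fin.mk_one, map_zero]
        ring
      · refine ⟨0, 0, a, ?_⟩
        have h1 : (p - (C a + C b * X 0 + C c * X 1)) * X 1 ∈ Idl k :=
          Ideal.mul_mem_right _ _ hp
        have h2 : C b * ((X 0 : MvPolynomial (Fin 2) ℤ) * X 1) ∈ Idl k :=
          Ideal.mul_mem_left _ _ g2_mem
        have h3 : C c * ((X 1 : MvPolynomial (Fin 2) ℤ) ^ 2) ∈ Idl k :=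
          Ideal.mul_mem_left _ _ g3_mem
        have := Ideal.add_mem _ (Ideal.add_mem _ h1 h2) h3
        convert this using 1
        simp only [Fin.zero_eta, Fin.mk_one, map_zero]
        ring

noncomputable def phiBar (k : ℕ) : Rring k →+* M k :=
  Ideal.Quotient.lift (Idl k) (phi k) (fun p hp => Idl_le_ker hp)

@[simp] lemma phiBar_mk (p : MvPolynomial (Fin 2) ℤ) :
    phiBar k (Ideal.Quotient.mk (Idl k) p) = phi k p := rfl

lemma phiBar_bij : Function.Bijective (phiBar k) := by
  constructor
  · rw [injective_iff_map_eq_zero]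
    intro x hx
    obtain ⟨p, rfl⟩ := Ideal.Quotient.mk_surjective x
    rw [phiBar_mk] at hx
    obtain ⟨a, b, c, hred⟩ := reduce (k := k) p
    have hval : phi k (C a + C b * X 0 + C c * X 1) = 0 := by
      have : phi k (p - (C a + C b * X 0 + C c * X 1)) = 0 := Idl_le_ker hred
      rw [map_sub, hx, zero_sub, neg_eq_zero] at this
      exact this
    rw [map_add, map_add, map_mul, map_mul] at hval
    simp only [phi_C, phi_X0, phi_X1] at hval
    have ha : a = 0 := by have := congrArg M.a hval; simpa using this
    have hb : b = 0 := by have := congrArg M.b hval; simpa using this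
    have hc : c = 0 := by have := congrArg M.c hval; simpa using this
    subst ha; subst hb; subst hc
    rw [Ideal.Quotient.eq_zero_iff_mem]
    have h2 : p ∈ Idl k := by
      have h3 : p - (C 0 + C 0 * X 0 + C 0 * X 1) = p := by simp
      rwa [h3] at hred
    exact h2
  · intro m
    refine ⟨Ideal.Quotient.mk _ (C m.a + C m.b * X 0 + C m.c * X 1), ?_⟩
    rw [phiBar_mk, map_add, map_add, map_mul, map_mul]
    simp only [phi_C, phi_X0, phi_X1]
    ext <;> simp

noncomputable def equivM (k : ℕ) : Rring k ≃+* M k :=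
  RingEquiv.ofBijective (phiBar k) phiBar_bij

end Rproof


namespace Rproof
variable {k l : ℕ}

def U (k : ℕ) : M k := ⟨0,1,0⟩
def V (k : ℕ) : M k := ⟨0,0,1⟩

lemma sq_struct (hk : 1 ≤ k) {x : M k} (h : x * x = 0) : x.a = 0 ∧ x.b = 0 := by
  have ha := congrArg M.a h
  simp only [M.mul_a, M.zero_a] at ha
  have ha0 : x.a = 0 := mul_self_eq_zero.mp ha
  have hc := congrArg M.c h
  simp only [M.mul_c, M.zero_c, ha0, zero_mul, mul_zero, zero_add, add_zero] at hc
  have hkpos : (0:ℤ) < 2 * (k:ℤ) := by positivity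
  have hb2 : x.b * x.b = 0 := by
    rcases mul_eq_zero.mp hc with h' | h'
    · exact absurd h' (by omega)
    · exact h'
  exact ⟨ha0, mul_self_eq_zero.mp hb2⟩

lemma cube_a_zero {x : M k} (h : x * x * x = 0) : x.a = 0 := by
  have ha := congrArg M.a h
  simp only [M.mul_a, M.zero_a] at ha
  have : x.a ^ 3 = 0 := by rw [pow_succ, pow_two]; exact ha
  exact pow_eq_zero_iff (by norm_num) |>.mp this

@[simp] lemma U_a : (U k).a = 0 := rfl
@[simp] lemma U_b : (U k).b = 1 := rfl
@[simp] lemma U_c : (U k).c = 0 := rfl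
@[simp] lemma V_a : (V k).a = 0 := rfl
@[simp] lemma V_b : (V k).b = 0 := rfl
@[simp] lemma V_c : (V k).c = 1 := rfl

lemma V_sq : V k * V k = 0 := by ext <;> simp [V]
lemma U_cube : U k * U k * U k = 0 := by ext <;> simp [U]
lemma U_sq : U k * U k = ((2 * (k:ℕ) : ℤ) : M k) * V k := by
  ext <;> simp only [M.intCast_eq, M.mul_a, M.mul_b, M.mul_c, U, V] <;> ring

lemma decomp {x : M k} (hx : x.a = 0) :
    x = ((x.b : ℤ) : M k) * U k + ((x.c : ℤ) : M k) * V k := by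
  ext <;> simp only [M.intCast_eq, M.mul_a, M.mul_b, M.mul_c, M.add_a, M.add_b, M.add_c, U, V] <;>
    simp [hx]

lemma image_decomp (g : M k ≃+* M l) {x : M k} (hx : x.a = 0) :
    g x = ((x.b : ℤ) : M l) * g (U k) + ((x.c : ℤ) : M l) * g (V k) := by
  conv_lhs => rw [decomp hx]
  rw [map_add, map_mul, map_mul, map_intCast, map_intCast]

lemma M_eq_of_equiv (hk : 1 ≤ k) (hl : 1 ≤ l) (g : M k ≃+* M l) : k = l := by
  -- g V has a = b = 0
  have hgV : g (V k) * g (V k) = 0 := by rw [← map_mul, V_sq, map_zero]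
  obtain ⟨hVa, hVb⟩ := sq_struct hl hgV
  -- g U has a = 0
  have hgU3 : g (U k) * g (U k) * g (U k) = 0 := by
    rw [← map_mul, ← map_mul, U_cube, map_zero]
  have hUa : (g (U k)).a = 0 := cube_a_zero hgU3
  -- key identity : 2*l*(gU.b)^2 = 2*k*(gV.c)
  have hsq : g (U k) * g (U k) = ((2 * (k:ℕ) : ℤ) : M l) * g (V k) := by
    rw [← map_mul, U_sq, map_mul, map_intCast]
  have hkey : 2 * (l:ℤ) * ((g (U k)).b * (g (U k)).b) = 2 * (k:ℤ) * (g (V k)).c := by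
    have := congrArg M.c hsq
    simp only [M.mul_c, hUa, hVa, M.intCast_eq, zero_mul, mul_zero, zero_add, add_zero] at this
    exact this
  -- preimage of U l
  set w := g.symm (U l) with hw
  have hw3 : w * w * w = 0 := by
    have : g (w * w * w) = 0 := by
      rw [map_mul, map_mul]
      simp only [hw, RingEquiv.apply_symm_apply]
      exact U_cube
    exact (map_eq_zero_iff g g.injective).mp this
  have hwa : w.a = 0 := cube_a_zero hw3
  have hUl : U l = ((w.b : ℤ) : M l) * g (U k) + ((w.c : ℤ) : M l) * g (V k) := by
    have h0 : U l = g w := by rw [hw, g.apply_symm_apply]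
    rw [h0, image_decomp g hwa]
  have hbu : w.b * (g (U k)).b = 1 := by
    have := congrArg M.b hUl
    simp only [M.add_b, M.mul_b, M.intCast_eq, hVb, hUa, U_b, mul_zero, zero_mul,
      add_zero, zero_add, mul_one] at this
    exact this.symm
  -- preimage of V l
  set w' := g.symm (V l) with hw'
  have hw'2 : w' * w' = 0 := by
    have : g (w' * w') = 0 := by
      rw [map_mul]
      simp only [hw', RingEquiv.apply_symm_apply]
      exact V_sq
    exact (map_eq_zero_iff g g.injective).mp this
  obtain ⟨hw'a, hw'b⟩ := sq_struct hk hw'2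
  have hVl : V l = ((w'.b : ℤ) : M l) * g (U k) + ((w'.c : ℤ) : M l) * g (V k) := by
    have h0 : V l = g w' := by rw [hw', g.apply_symm_apply]
    rw [h0, image_decomp g hw'a]
  have hcv : w'.c * (g (V k)).c = 1 := by
    have := congrArg M.c hVl
    simp only [M.add_c, M.mul_c, M.intCast_eq, hw'b, hVa, hVb, hUa, V_c, mul_zero, zero_mul,
      add_zero, zero_add, mul_one, Int.cast_zero] at this
    exact this.symm
  -- conclude
  have hbU_unit : (g (U k)).b = 1 ∨ (g (U k)).b = -1 :=
    Int.isUnit_iff.mp (IsUnit.of_mul_eq_one _ ((mul_comm _ _).trans hbu))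
  have hb2 : (g (U k)).b * (g (U k)).b = 1 := by rcases hbU_unit with h | h <;> rw [h] <;> ring
  have hcV_unit : (g (V k)).c = 1 ∨ (g (V k)).c = -1 :=
    Int.isUnit_iff.mp (IsUnit.of_mul_eq_one _ ((mul_comm _ _).trans hcv))
  rw [hb2, mul_one] at hkey
  rcases hcV_unit with h | h
  · rw [h, mul_one] at hkey; omega
  · rw [h] at hkey; omega

lemma not_iso (hk : 1 ≤ k) (hl : 1 ≤ l) (hne : k ≠ l) :
    ¬ Nonempty (Rring k ≃+* Rring l) := by
  rintro ⟨e⟩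
  exact hne (M_eq_of_equiv hk hl (((equivM k).symm.trans e).trans (equivM l)))

end Rproof


namespace Rproof

noncomputable section Rat
open Polynomial in
/-- `ℚ[x]/(x³)`. -/
noncomputable abbrev Q3 : Type := Polynomial ℚ ⧸ Ideal.span {(Polynomial.X : Polynomial ℚ) ^ 3}

/-- class of `x` in `Q3`. -/
noncomputable def xq : Q3 := Ideal.Quotient.mk _ Polynomial.X

/-- class of `x²/(2k)` in `Q3`. -/
noncomputable def vq (k : ℕ) : Q3 :=
  Ideal.Quotient.mk _ (Polynomial.C (2*(k:ℚ))⁻¹ * Polynomial.X ^ 2)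

lemma xq_cube : xq ^ 3 = 0 := by
  rw [xq, ← map_pow, Ideal.Quotient.eq_zero_iff_mem]
  exact Ideal.subset_span rfl

variable (k : ℕ)

lemma two_k_ne (hk : 1 ≤ k) : (2*(k:ℚ)) ≠ 0 := by
  have : 0 < (k:ℚ) := by exact_mod_cast hk
  positivity

lemma intCast_Q3 (n : ℤ) : ((n : Q3)) = Ideal.Quotient.mk _ (Polynomial.C (n:ℚ)) := by
  rw [← map_intCast (Ideal.Quotient.mk (Ideal.span {(Polynomial.X : Polynomial ℚ) ^ 3})) n]
  norm_cast

lemma key1 (hk : 1 ≤ k) : (Int.cast (2*(k:ℤ)) : Q3) * vq k = xq ^ 2 := by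
  rw [intCast_Q3, vq, xq, ← map_mul, ← map_pow]
  congr 1
  push_cast
  rw [← mul_assoc, ← Polynomial.C_mul, mul_inv_cancel₀ (two_k_ne k hk), Polynomial.C_1, one_mul]

lemma key2 : xq * vq k = 0 := by
  rw [vq, xq, ← map_mul, Ideal.Quotient.eq_zero_iff_mem]
  exact Ideal.mem_span_singleton.mpr ⟨Polynomial.C (2*(k:ℚ))⁻¹, by ring⟩

lemma key3 : (vq k) ^ 2 = 0 := by
  rw [vq, ← map_pow, Ideal.Quotient.eq_zero_iff_mem]
  refine Ideal.mem_span_singleton.mpr ⟨Polynomial.C ((2*(k:ℚ))⁻¹)^2 * Polynomial.X, by ring⟩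

lemma rho_aux (hk : 1 ≤ k) : ∀ p ∈ Idl k, aeval ![xq, vq k] p = 0 := by
  intro p hp
  induction hp using Submodule.span_induction with
  | mem x hx =>
      simp only [Set.mem_insert_iff, Set.mem_singleton_iff] at hx
      rcases hx with h | h | h
      · subst h
        rw [map_sub, map_mul, map_pow]
        simp only [aeval_X, Matrix.cons_val_zero, Matrix.cons_val_one, Matrix.head_cons, aeval_C]
        rw [eq_intCast (algebraMap ℤ Q3), key1 k hk, sub_self]
      · subst h
        rw [map_mul]
        simp only [aeval_X, Matrix.cons_val_zero, Matrix.cons_val_one, Matrix.head_cons]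
        exact key2 k
      · subst h
        rw [map_pow]
        simp only [aeval_X, Matrix.cons_val_one, Matrix.head_cons]
        exact key3 k
  | zero => simp
  | add x y _ _ hx hy => rw [map_add, hx, hy, add_zero]
  | smul a x _ hx => rw [smul_eq_mul, map_mul, hx, mul_zero]

/-- the map `R_k → ℚ[x]/(x³)`, `u ↦ x`, `v ↦ x²/(2k)`. -/
noncomputable def rho (hk : 1 ≤ k) : Rring k →ₐ[ℤ] Q3 :=
  Ideal.Quotient.liftₐ (Idl k) (aeval ![xq, vq k]) (rho_aux k hk)

/-- class of `u` in `R_k`. -/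
noncomputable def ubar : Rring k := Ideal.Quotient.mk (Idl k) (X 0)
/-- class of `v` in `R_k`. -/
noncomputable def vbar : Rring k := Ideal.Quotient.mk (Idl k) (X 1)

@[simp] lemma rho_ubar (hk : 1 ≤ k) : rho k hk (ubar k) = xq := by
  rw [rho, ubar, Ideal.Quotient.liftₐ_apply]; erw [Ideal.Quotient.lift_mk]
  simp

@[simp] lemma rho_vbar (hk : 1 ≤ k) : rho k hk (vbar k) = vq k := by
  rw [rho, vbar, Ideal.Quotient.liftₐ_apply]; erw [Ideal.Quotient.lift_mk]
  simp

lemma mk_C_R (n : ℤ) : Ideal.Quotient.mk (Idl k) (C n) = (n : Rring k) :=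
  eq_intCast ((Ideal.Quotient.mk (Idl k)).comp (C : ℤ →+* MvPolynomial (Fin 2) ℤ)) n

lemma ubar_sq : ubar k ^ 2 = ((2*(k:ℤ) : ℤ) : Rring k) * vbar k := by
  rw [ubar, vbar, ← map_pow, ← mk_C_R, ← map_mul, Ideal.Quotient.eq]
  exact g1_mem

lemma ubar_cube : ubar k ^ 3 = 0 := by
  rw [ubar, ← map_pow, Ideal.Quotient.eq_zero_iff_mem]
  have h : (X 0 : MvPolynomial (Fin 2) ℤ) ^ 3
      = X 0 * (X 0 ^ 2 - C (2 * (k : ℤ)) * X 1) + C (2 * (k:ℤ)) * (X 0 * X 1) := by ring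
  rw [h]
  exact Ideal.add_mem _ (Ideal.mul_mem_left _ _ g1_mem) (Ideal.mul_mem_left _ _ g2_mem)

/-- `1 ⊗ ū` in `ℚ ⊗ R_k`. -/
noncomputable def uT : TensorProduct ℤ ℚ (Rring k) :=
  Algebra.TensorProduct.includeRight (ubar k)

lemma uT_cube : uT k ^ 3 = 0 := by
  rw [uT, ← map_pow, ubar_cube, map_zero]

lemma G_aux : ∀ p ∈ Ideal.span {(Polynomial.X : Polynomial ℚ) ^ 3},
    Polynomial.aeval (uT k) p = 0 := by
  intro p hp
  obtain ⟨q, rfl⟩ := Ideal.mem_span_singleton.mp hp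
  simp only [map_mul, map_pow, Polynomial.aeval_X, Polynomial.aeval_X_pow, uT_cube, zero_mul]
  exact zero_mul ((Polynomial.aeval (uT k)) q)

/-- the map `ℚ[x]/(x³) → ℚ ⊗ R_k`, `x ↦ 1 ⊗ ū`. -/
noncomputable def Gmap : Q3 →ₐ[ℚ] TensorProduct ℤ ℚ (Rring k) :=
  Ideal.Quotient.liftₐ _ (Polynomial.aeval (uT k)) (G_aux k)

@[simp] lemma Gmap_xq : Gmap k xq = uT k := by
  rw [Gmap, xq, Ideal.Quotient.liftₐ_apply]; erw [Ideal.Quotient.lift_mk]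
  simp

/-- the map `ℚ ⊗ R_k → ℚ[x]/(x³)`. -/
noncomputable def Fmap (hk : 1 ≤ k) : TensorProduct ℤ ℚ (Rring k) →ₐ[ℚ] Q3 :=
  Algebra.TensorProduct.lift (Algebra.ofId ℚ Q3) (rho k hk) (fun _ _ => Commute.all _ _)

@[simp] lemma Fmap_tmul (hk : 1 ≤ k) (q : ℚ) (r : Rring k) :
    Fmap k hk (q ⊗ₜ r) = algebraMap ℚ Q3 q * rho k hk r := by
  rw [Fmap, Algebra.TensorProduct.lift_tmul]; rfl

lemma Gmap_vq (hk : 1 ≤ k) : Gmap k (vq k) = Algebra.TensorProduct.includeRight (vbar k) := by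
  rw [Gmap, vq, Ideal.Quotient.liftₐ_apply]; erw [Ideal.Quotient.lift_mk]
  show Polynomial.aeval (uT k) (Polynomial.C (2*(k:ℚ))⁻¹ * Polynomial.X ^ 2) = _
  simp only [map_mul, map_pow, RingHom.coe_coe, Polynomial.aeval_X, Polynomial.aeval_X_pow, Polynomial.aeval_C]
  have h2 : uT k ^ 2 = (2*(k:ℤ)) • Algebra.TensorProduct.includeRight (vbar k) := by
    rw [uT, ← map_pow, ubar_sq, ← zsmul_eq_mul, map_zsmul]
  rw [h2, ← Algebra.smul_def, ← Int.cast_smul_eq_zsmul ℚ, smul_smul]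
  push_cast
  rw [inv_mul_cancel₀ (two_k_ne k hk), one_smul]

lemma FG (hk : 1 ≤ k) : (Fmap k hk).comp (Gmap k) = AlgHom.id ℚ Q3 := by
  apply Ideal.Quotient.algHom_ext
  apply Polynomial.algHom_ext
  simp only [AlgHom.comp_apply, Ideal.Quotient.mkₐ_eq_mk, AlgHom.id_apply]
  have hx : (Ideal.Quotient.mk (Ideal.span {(Polynomial.X : Polynomial ℚ) ^ 3}))
      Polynomial.X = xq := rfl
  rw [hx, Gmap_xq, uT, Algebra.TensorProduct.includeRight_apply, Fmap_tmul, map_one, one_mul,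
    rho_ubar]

lemma GF (hk : 1 ≤ k) : (Gmap k).comp (Fmap k hk) = AlgHom.id ℚ (TensorProduct ℤ ℚ (Rring k)) := by
  apply Algebra.TensorProduct.ext
  · apply AlgHom.ext
    intro q
    have h1 : ∀ (f : ℚ →ₐ[ℚ] TensorProduct ℤ ℚ (Rring k)),
        f q = algebraMap ℚ (TensorProduct ℤ ℚ (Rring k)) q := fun f =>
      (congrArg f (Algebra.algebraMap_self_apply q).symm).trans (f.commutes q)
    rw [AlgHom.comp_apply, h1, h1]
    exact ((Gmap k).comp (Fmap k hk)).commutes q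
  · apply Ideal.Quotient.algHom_ext
    apply MvPolynomial.algHom_ext
    intro i
    fin_cases i
    · simp only [AlgHom.comp_apply, Ideal.Quotient.mkₐ_eq_mk, AlgHom.coe_restrictScalars',
        Fin.zero_eta, AlgHom.id_apply]
      rw [show (Ideal.Quotient.mk (Idl k)) (X 0) = ubar k from rfl,
        Algebra.TensorProduct.includeRight_apply, Fmap_tmul, map_one, one_mul, rho_ubar,
        Gmap_xq, uT, Algebra.TensorProduct.includeRight_apply]
    · simp only [AlgHom.comp_apply, Ideal.Quotient.mkₐ_eq_mk, AlgHom.coe_restrictScalars',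
        Fin.mk_one, AlgHom.id_apply]
      rw [show (Ideal.Quotient.mk (Idl k)) (X 1) = vbar k from rfl,
        Algebra.TensorProduct.includeRight_apply, Fmap_tmul, map_one, one_mul, rho_vbar,
        Gmap_vq k hk, Algebra.TensorProduct.includeRight_apply]

/-- `ℚ ⊗ R_k ≃ ℚ[x]/(x³)` as `ℚ`-algebras. -/
noncomputable def Ek (hk : 1 ≤ k) :
    (TensorProduct ℤ ℚ (Rring k)) ≃ₐ[ℚ]
      (Polynomial ℚ ⧸ Ideal.span {(Polynomial.X : Polynomial ℚ) ^ 3}) :=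
  AlgEquiv.ofAlgHom (Fmap k hk) (Gmap k) (FG k hk) (GF k hk)

end Rat
end Rproof


theorem Rring_not_iso_but_rat_iso (k l : ℕ) (hk : 1 ≤ k) (hl : 1 ≤ l) :
    (k ≠ l → ¬ Nonempty (Rring k ≃+* Rring l)) ∧
    Nonempty ((TensorProduct ℤ ℚ (Rring k)) ≃ₐ[ℚ] (TensorProduct ℤ ℚ (Rring l))) ∧
    Nonempty ((TensorProduct ℤ ℚ (Rring k)) ≃ₐ[ℚ]
      (Polynomial ℚ ⧸ Ideal.span {(Polynomial.X : Polynomial ℚ) ^ 3})) := by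
  exact ⟨fun hne => Rproof.not_iso hk hl hne,
    ⟨(Rproof.Ek k hk).trans (Rproof.Ek l hl).symm⟩,
    ⟨Rproof.Ek k hk⟩⟩
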